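/- arXiv:2306.07433 — 3 statements merged into one kernel-verified Lean document; each statement's English description precedes it below -/
import Mathlib

section
/- Let a ≠ 0, b, c be real numbers and I be a bounded interval of the real line. Then the Lebesgue measure of the set {x ∈ ℝ : a x² + b x + c ∈ I} is at most C · |I|^{1/2} / |a|^{1/2} for some universal constant C. -/
open MeasureTheory

lemma quad_aux (u v d : ℝ) :
    volume {x : ℝ | (x + d) ^ 2 ∈ Set.Icc u v} ≤
      ENNReal.ofReal (2 * Real.sqrt (v - u)) := by
  set u' : ℝ := max u 0 with hu'
  have hu0 : (0:ℝ) ≤ u' := le_max_right u 0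
  have hsub : {x : ℝ | (x + d) ^ 2 ∈ Set.Icc u v} ⊆
      Set.Icc (Real.sqrt u' - d) (Real.sqrt v - d) ∪
      Set.Icc (-Real.sqrt v - d) (-Real.sqrt u' - d) := by
    intro x hx
    obtain ⟨h1, h2⟩ := hx
    have hv : |x + d| ≤ Real.sqrt v := Real.abs_le_sqrt h2
    have hu : Real.sqrt u' ≤ |x + d| := by
      rw [← Real.sqrt_sq_eq_abs]
      exact Real.sqrt_le_sqrt (max_le h1 (sq_nonneg _))
    rcases le_total 0 (x + d) with h | h
    · left
      rw [abs_of_nonneg h] at hv hu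
      constructor <;> linarith
    · right
      rw [abs_of_nonpos h] at hv hu
      constructor <;> linarith
  have hkey : Real.sqrt v - Real.sqrt u' ≤ Real.sqrt (v - u) := by
    rcases le_or_gt v u' with h | h
    · have : Real.sqrt v ≤ Real.sqrt u' := Real.sqrt_le_sqrt h
      linarith [Real.sqrt_nonneg (v - u)]
    · have hv0 : (0:ℝ) ≤ v := le_trans hu0 h.le
      have hvu : (0:ℝ) ≤ v - u := by
        have : u ≤ u' := le_max_left u 0
        linarith
      nlinarith [Real.sq_sqrt hu0, Real.sq_sqrt hv0, Real.sq_sqrt hvu,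
        Real.sqrt_nonneg u', Real.sqrt_nonneg (v - u), Real.sqrt_nonneg v,
        le_max_left u 0]
  calc volume {x : ℝ | (x + d) ^ 2 ∈ Set.Icc u v}
      ≤ volume (Set.Icc (Real.sqrt u' - d) (Real.sqrt v - d) ∪
          Set.Icc (-Real.sqrt v - d) (-Real.sqrt u' - d)) := measure_mono hsub
    _ ≤ volume (Set.Icc (Real.sqrt u' - d) (Real.sqrt v - d)) +
          volume (Set.Icc (-Real.sqrt v - d) (-Real.sqrt u' - d)) := measure_union_le _ _
    _ = ENNReal.ofReal (Real.sqrt v - Real.sqrt u') +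
          ENNReal.ofReal (Real.sqrt v - Real.sqrt u') := by
        rw [Real.volume_Icc, Real.volume_Icc]
        ring_nf
    _ ≤ ENNReal.ofReal (Real.sqrt (v - u)) + ENNReal.ofReal (Real.sqrt (v - u)) := by
        gcongr
    _ = ENNReal.ofReal (2 * Real.sqrt (v - u)) := by
        rw [← ENNReal.ofReal_add (Real.sqrt_nonneg _) (Real.sqrt_nonneg _)]
        ring_nf

/-- Sublevel-set measure bound for quadratic polynomials. -/
theorem quadratic_sublevel_measure_bound :
    ∃ C : ℝ, 0 < C ∧ ∀ (a b c : ℝ), a ≠ 0 →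
      ∀ I : Set ℝ, I.OrdConnected → Bornology.IsBounded I →
        volume {x : ℝ | a * x ^ 2 + b * x + c ∈ I} ≤
          ENNReal.ofReal (C * Real.sqrt (volume I).toReal / Real.sqrt |a|) := by
  refine ⟨2, by norm_num, fun a b c ha I hI hb => ?_⟩
  rcases I.eq_empty_or_nonempty with rfl | hne
  · simp
  set m := sInf I with hm
  set M := sSup I with hM
  have hbdd : BddBelow I := hb.bddBelow
  have hbdd' : BddAbove I := hb.bddAbove
  have hIcc : I ⊆ Set.Icc m M := fun x hx => ⟨csInf_le hbdd hx, le_csSup hbdd' hx⟩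
  have hmM : m ≤ M := by
    obtain ⟨x, hx⟩ := hne
    exact le_trans (csInf_le hbdd hx) (le_csSup hbdd' hx)
  -- Ioo m M ⊆ I
  have hIoo : Set.Ioo m M ⊆ I := by
    intro y hy
    obtain ⟨p, hp, hpy⟩ := exists_lt_of_csInf_lt hne hy.1
    obtain ⟨q, hq, hyq⟩ := exists_lt_of_lt_csSup hne hy.2
    exact hI.out hp hq ⟨hpy.le, hyq.le⟩
  have hvolI_ne : volume I ≠ ⊤ := by
    refine ne_top_of_le_ne_top ?_ (measure_mono hIcc)
    simp [Real.volume_Icc]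
  have hML : M - m ≤ (volume I).toReal := by
    have h1 : ENNReal.ofReal (M - m) ≤ volume I := by
      calc ENNReal.ofReal (M - m) = volume (Set.Ioo m M) := (Real.volume_Ioo).symm
        _ ≤ volume I := measure_mono hIoo
    have := ENNReal.toReal_mono hvolI_ne h1
    rwa [ENNReal.toReal_ofReal (by linarith)] at this
  set d : ℝ := b / (2 * a) with hd
  set k : ℝ := c - b ^ 2 / (4 * a) with hk
  have hkey : ∀ x : ℝ, a * x ^ 2 + b * x + c = a * (x + d) ^ 2 + k := by
    intro x
    rw [hd, hk]
    field_simp [hd, hk]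
    ring
  have ha' : (0:ℝ) < |a| := abs_pos.mpr ha
  -- the set is contained in a quadratic sublevel set for Icc
  set u : ℝ := if 0 < a then (m - k) / a else (M - k) / a with hu
  set v : ℝ := if 0 < a then (M - k) / a else (m - k) / a with hv
  have hvu : v - u = (M - m) / |a| := by
    rcases lt_or_gt_of_ne ha with h | h
    · rw [hu, hv, if_neg (not_lt.mpr h.le), if_neg (not_lt.mpr h.le), abs_of_neg h]
      rw [div_neg, ← neg_div, div_sub_div_same]
      ring_nf
    · rw [hu, hv, if_pos h, if_pos h, abs_of_pos h]
      field_simp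
      ring
  have hsub : {x : ℝ | a * x ^ 2 + b * x + c ∈ I} ⊆
      {x : ℝ | (x + d) ^ 2 ∈ Set.Icc u v} := by
    intro x hx
    have hx' := hIcc hx
    rw [hkey x] at hx'
    obtain ⟨h1, h2⟩ := hx'
    rcases lt_or_gt_of_ne ha with h | h
    · rw [hu, hv, if_neg (not_lt.mpr h.le), if_neg (not_lt.mpr h.le)]
      constructor
      · rw [div_le_iff_of_neg h]; linarith
      · rw [le_div_iff_of_neg h]; linarith
    · rw [hu, hv, if_pos h, if_pos h]
      constructor
      · rw [div_le_iff₀ h]; linarith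
      · rw [le_div_iff₀ h]; linarith
  calc volume {x : ℝ | a * x ^ 2 + b * x + c ∈ I}
      ≤ volume {x : ℝ | (x + d) ^ 2 ∈ Set.Icc u v} := measure_mono hsub
    _ ≤ ENNReal.ofReal (2 * Real.sqrt (v - u)) := quad_aux u v d
    _ ≤ ENNReal.ofReal (2 * Real.sqrt (volume I).toReal / Real.sqrt |a|) := by
        apply ENNReal.ofReal_le_ofReal
        rw [hvu, Real.sqrt_div (by linarith) |a|, mul_div_assoc]
        gcongr <;> first
          | exact Real.sqrt_le_sqrt hML
          | positivity
end

section
/- Let a ≠ 0, b, c be real numbers and I be a bounded interval of the real line. Then the number of integers q with a q² + b q + c ∈ I is at most C · (|I|^{1/2} / |a|^{1/2} + 1) for some universal constant C. -/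
open MeasureTheory

lemma countIcc (α β : ℝ) :
    {q : ℤ | (q : ℝ) ∈ Set.Icc α β}.Finite ∧
    (α ≤ β → ({q : ℤ | (q : ℝ) ∈ Set.Icc α β}.ncard : ℝ) ≤ β - α + 1) := by
  have hset : {q : ℤ | (q : ℝ) ∈ Set.Icc α β} = ↑(Finset.Icc ⌈α⌉ ⌊β⌋) := by
    ext q
    simp [Set.mem_Icc, Int.ceil_le, Int.le_floor]
  rw [hset]
  refine ⟨(Finset.Icc ⌈α⌉ ⌊β⌋).finite_toSet, fun hab => ?_⟩
  rw [Set.ncard_coe_finset, Int.card_Icc]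
  have h1 : (⌊β⌋ : ℝ) ≤ β := Int.floor_le β
  have h2 : α ≤ (⌈α⌉ : ℝ) := Int.le_ceil α
  rcases le_or_gt (⌈α⌉) (⌊β⌋ + 1) with h | h
  · have : ((⌊β⌋ + 1 - ⌈α⌉).toNat : ℤ) = ⌊β⌋ + 1 - ⌈α⌉ := Int.toNat_of_nonneg (by omega)
    have := congrArg (fun x : ℤ => (x : ℝ)) this
    push_cast at this ⊢
    rw [this]; linarith
  · have : (⌊β⌋ + 1 - ⌈α⌉).toNat = 0 := by omega
    rw [this]; push_cast; linarith

lemma keyPos (a b c : ℝ) (ha : 0 < a) (I : Set ℝ) (hoc : I.OrdConnected)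
    (hbd : Bornology.IsBounded I) :
    {q : ℤ | a * (q : ℝ) ^ 2 + b * q + c ∈ I}.Finite ∧
    ({q : ℤ | a * (q : ℝ) ^ 2 + b * q + c ∈ I}.ncard : ℝ) ≤
      2 * (Real.sqrt (volume I).toReal / Real.sqrt a + 1) := by
  set S := {q : ℤ | a * (q : ℝ) ^ 2 + b * q + c ∈ I} with hS
  have hrhs : (0:ℝ) ≤ 2 * (Real.sqrt (volume I).toReal / Real.sqrt a + 1) := by positivity
  by_cases hSn : S.Nonempty
  swap
  · rw [Set.not_nonempty_iff_eq_empty] at hSn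
    simp [hSn, hrhs]
  -- I is nonempty
  obtain ⟨q0, hq0⟩ := hSn
  have hI : I.Nonempty := ⟨_, hq0⟩
  set m := sInf I with hm
  set M := sSup I with hM
  have hmem : ∀ x ∈ I, m ≤ x ∧ x ≤ M := fun x hx =>
    ⟨csInf_le hbd.bddBelow hx, le_csSup hbd.bddAbove hx⟩
  -- volume bound
  have hvol : M - m ≤ (volume I).toReal := by
    have hIoo : Set.Ioo m M ⊆ I := by
      intro z hz
      obtain ⟨x, hxI, hxz⟩ := exists_lt_of_csInf_lt hI hz.1
      obtain ⟨y, hyI, hzy⟩ := exists_lt_of_lt_csSup hI hz.2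
      exact hoc.out hxI hyI ⟨hxz.le, hzy.le⟩
    have hsub : I ⊆ Set.Icc m M := fun x hx => ⟨(hmem x hx).1, (hmem x hx).2⟩
    have htop : volume I ≠ ⊤ :=
      ((measure_mono hsub).trans_lt (by rw [Real.volume_Icc]; exact ENNReal.ofReal_lt_top)).ne
    have h1 : volume (Set.Ioo m M) ≤ volume I := measure_mono hIoo
    have hmM : m ≤ M := le_trans (hmem _ hq0).1 (hmem _ hq0).2
    have := ENNReal.toReal_mono htop h1
    rwa [Real.volume_Ioo, ENNReal.toReal_ofReal (by linarith)] at this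
  set L := Real.sqrt (volume I).toReal with hL
  have hLb : Real.sqrt (M - m) ≤ L := Real.sqrt_le_sqrt hvol
  set k := c - b ^ 2 / (4 * a) with hk
  set d := b / (2 * a) with hd
  set u := (m - k) / a with hu
  set v := (M - k) / a with hv
  set u0 := max u 0 with hu0
  have hquad : ∀ q : ℤ, a * (q : ℝ) ^ 2 + b * q + c = a * ((q : ℝ) + d) ^ 2 + k := by
    intro q
    rw [hk, hd]
    field_simp
    ring
  have hx : ∀ q ∈ S, u ≤ ((q : ℝ) + d) ^ 2 ∧ ((q : ℝ) + d) ^ 2 ≤ v := by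
    intro q hq
    have hq' := hmem _ hq
    rw [hquad q] at hq'
    constructor
    · rw [hu, div_le_iff₀ ha]
      nlinarith [hq'.1]
    · rw [hv, le_div_iff₀ ha]
      nlinarith [hq'.2]
  have hu00 : 0 ≤ u0 := le_max_right u 0
  have hu0v : u0 ≤ v := by
    obtain ⟨h1, h2⟩ := hx q0 hq0
    exact max_le (h1.trans h2) ((sq_nonneg _).trans h2)
  have hsqle : Real.sqrt u0 ≤ Real.sqrt v := Real.sqrt_le_sqrt hu0v
  have hlen : Real.sqrt v - Real.sqrt u0 ≤ L / Real.sqrt a := by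
    have hv0 : 0 ≤ v := hu00.trans hu0v
    have h1 : Real.sqrt v ≤ Real.sqrt u0 + Real.sqrt (v - u0) := by
      nlinarith [Real.sq_sqrt hv0, Real.sq_sqrt hu00, Real.sq_sqrt (sub_nonneg.2 hu0v),
        Real.sqrt_nonneg u0, Real.sqrt_nonneg (v - u0), Real.sqrt_nonneg v,
        mul_nonneg (Real.sqrt_nonneg u0) (Real.sqrt_nonneg (v - u0))]
    have h3 : v - u = (M - m) / a := by
      rw [hu, hv]
      field_simp
      ring
    have h2 : Real.sqrt (v - u0) ≤ Real.sqrt ((M - m) / a) := by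
      apply Real.sqrt_le_sqrt
      rw [← h3]
      have : u ≤ u0 := le_max_left u 0
      linarith
    have hmM : 0 ≤ M - m := sub_nonneg.2 (le_trans (hmem _ hq0).1 (hmem _ hq0).2)
    have h4 : Real.sqrt ((M - m) / a) = Real.sqrt (M - m) / Real.sqrt a :=
      Real.sqrt_div hmM a
    have h5 : Real.sqrt (M - m) / Real.sqrt a ≤ L / Real.sqrt a := by
      gcongr
    linarith
  have hsub : S ⊆ {q : ℤ | (q : ℝ) ∈ Set.Icc (-Real.sqrt v - d) (-Real.sqrt u0 - d)} ∪
      {q : ℤ | (q : ℝ) ∈ Set.Icc (Real.sqrt u0 - d) (Real.sqrt v - d)} := by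
    intro q hq
    obtain ⟨h1, h2⟩ := hx q hq
    have habs1 : |(q : ℝ) + d| ≤ Real.sqrt v := by
      rw [← Real.sqrt_sq_eq_abs]
      exact Real.sqrt_le_sqrt h2
    have habs2 : Real.sqrt u0 ≤ |(q : ℝ) + d| := by
      rw [← Real.sqrt_sq_eq_abs]
      exact Real.sqrt_le_sqrt (max_le h1 (sq_nonneg _))
    rcases le_or_gt 0 ((q : ℝ) + d) with hx0 | hx0
    · right
      rw [abs_of_nonneg hx0] at habs1 habs2
      exact ⟨by linarith, by linarith⟩
    · left
      rw [abs_of_neg hx0] at habs1 habs2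
      exact ⟨by linarith, by linarith⟩
  obtain ⟨hf1, hc1⟩ := countIcc (-Real.sqrt v - d) (-Real.sqrt u0 - d)
  obtain ⟨hf2, hc2⟩ := countIcc (Real.sqrt u0 - d) (Real.sqrt v - d)
  have hfin : S.Finite := (hf1.union hf2).subset hsub
  refine ⟨hfin, ?_⟩
  have hle := Set.ncard_le_ncard hsub (hf1.union hf2)
  have hun := Set.ncard_union_le {q : ℤ | (q : ℝ) ∈ Set.Icc (-Real.sqrt v - d) (-Real.sqrt u0 - d)}
    {q : ℤ | (q : ℝ) ∈ Set.Icc (Real.sqrt u0 - d) (Real.sqrt v - d)}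
  have hb1 := hc1 (by linarith)
  have hb2 := hc2 (by linarith)
  have : (S.ncard : ℝ) ≤
      ({q : ℤ | (q : ℝ) ∈ Set.Icc (-Real.sqrt v - d) (-Real.sqrt u0 - d)}.ncard : ℝ) +
      ({q : ℤ | (q : ℝ) ∈ Set.Icc (Real.sqrt u0 - d) (Real.sqrt v - d)}.ncard : ℝ) := by
    exact_mod_cast (hle.trans hun)
  linarith


/-- Counting integers where a quadratic polynomial lies in a bounded interval. -/
theorem quadratic_integer_count_bound :
    ∃ C : ℝ, 0 < C ∧ ∀ (a b c : ℝ), a ≠ 0 →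
      ∀ I : Set ℝ, I.OrdConnected → Bornology.IsBounded I →
        {q : ℤ | a * (q : ℝ) ^ 2 + b * q + c ∈ I}.Finite ∧
        ({q : ℤ | a * (q : ℝ) ^ 2 + b * q + c ∈ I}.ncard : ℝ) ≤
          C * (Real.sqrt (volume I).toReal / Real.sqrt |a| + 1) := by
  refine ⟨2, two_pos, fun a b c ha I hoc hbd => ?_⟩
  rcases ha.lt_or_gt with hneg | hpos
  · have hoc' : (-I).OrdConnected := by
      constructor
      intro x hx y hy z hz
      exact hoc.out hy hx ⟨neg_le_neg hz.2, neg_le_neg hz.1⟩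
    have h1 := keyPos (-a) (-b) (-c) (by linarith) (-I) hoc' hbd.neg
    have hseteq : {q : ℤ | a * (q : ℝ) ^ 2 + b * q + c ∈ I} =
        {q : ℤ | (-a) * (q : ℝ) ^ 2 + (-b) * q + (-c) ∈ -I} := by
      ext q
      simp only [Set.mem_setOf_eq, Set.mem_neg]
      rw [show -((-a) * (q : ℝ) ^ 2 + (-b) * q + (-c)) = a * (q : ℝ) ^ 2 + b * q + c by ring]
    have hvol : volume (-I) = volume I := Measure.measure_neg volume I
    rw [hseteq, abs_of_neg hneg]
    rwa [hvol] at h1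
  · rw [abs_of_pos hpos]
    exact keyPos a b c hpos I hoc hbd
end

section
/- Let w(ξ, q) = ξ³ + ξ q² and H(ξ₁, q₁, ξ₂, q₂) = w(ξ₁+ξ₂, q₁+q₂) − w(ξ₁, q₁) − w(ξ₂, q₂). For fixed ξ = ξ₁ + ξ₂ ∈ ℝ with ξ > 0, fixed q ∈ ℝ, fixed q₁ ∈ ℝ, and any bounded interval I ⊆ ℝ, the Lebesgue measure of { ξ₁ ∈ ℝ : H(ξ₁, q₁, ξ − ξ₁, q − q₁) ∈ I } is at most C |I|^{1/2} / ξ^{1/2} for a universal constant C. -/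
open MeasureTheory

/-- Sublevel-set bound for the resonance function in `ξ₁`: for `ξ > 0` and a
bounded interval `I`, the measure of
`{ξ₁ : H(ξ₁, q₁, ξ - ξ₁, q - q₁) ∈ I}` is at most `C |I|^{1/2} / ξ^{1/2}`,
where `H(ξ₁, q₁, ξ₂, q₂) = w(ξ₁+ξ₂, q₁+q₂) - w(ξ₁, q₁) - w(ξ₂, q₂)` and
`w(ξ, q) = ξ³ + ξ q²`. -/
theorem resonance_sublevel_measure_bound :
    ∃ C : ℝ, 0 < C ∧ ∀ (ξ q q₁ : ℝ), 0 < ξ →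
      ∀ I : Set ℝ, I.OrdConnected → Bornology.IsBounded I →
        volume {ξ₁ : ℝ |
            (ξ ^ 3 + ξ * q ^ 2) - (ξ₁ ^ 3 + ξ₁ * q₁ ^ 2)
              - ((ξ - ξ₁) ^ 3 + (ξ - ξ₁) * (q - q₁) ^ 2) ∈ I} ≤
          ENNReal.ofReal (C * Real.sqrt (volume I).toReal / Real.sqrt ξ) := by
  refine ⟨2, two_pos, ?_⟩
  intro ξ q q₁ hξ I hI hIb
  rcases I.eq_empty_or_nonempty with hIe | hne
  · simp [hIe]
  have hbb := hIb.bddBelow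
  have hba := hIb.bddAbove
  set m := sInf I with hm
  set M := sSup I with hM
  have hmM : m ≤ M := csInf_le_csSup hne hbb hba
  have hIcc : I ⊆ Set.Icc m M := fun x hx => ⟨csInf_le hbb hx, le_csSup hba hx⟩
  have hIoo : Set.Ioo m M ⊆ I := by
    rintro x ⟨hx1, hx2⟩
    obtain ⟨a, ha, hax⟩ := exists_lt_of_csInf_lt hne hx1
    obtain ⟨b, hb, hxb⟩ := exists_lt_of_lt_csSup hne hx2
    exact hI.out ha hb ⟨hax.le, hxb.le⟩
  have hvol : volume I = ENNReal.ofReal (M - m) := by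
    refine le_antisymm ?_ ?_
    · calc volume I ≤ volume (Set.Icc m M) := measure_mono hIcc
        _ = ENNReal.ofReal (M - m) := by rw [Real.volume_Icc]
    · calc ENNReal.ofReal (M - m) = volume (Set.Ioo m M) := (Real.volume_Ioo).symm
        _ ≤ volume I := measure_mono hIoo
  have hL : (volume I).toReal = M - m := by
    rw [hvol, ENNReal.toReal_ofReal (by linarith)]
  set B := 3 * ξ ^ 2 + (q - q₁) ^ 2 - q₁ ^ 2 with hB
  set Cc := ξ * q ^ 2 - ξ * (q - q₁) ^ 2 with hCc
  set d := B / (6 * ξ) with hd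
  set E := Cc + 3 * ξ * d ^ 2 with hE
  have hξ0 : (ξ : ℝ) ≠ 0 := ne_of_gt hξ
  have hf : ∀ x : ℝ, (ξ ^ 3 + ξ * q ^ 2) - (x ^ 3 + x * q₁ ^ 2)
              - ((ξ - x) ^ 3 + (ξ - x) * (q - q₁) ^ 2) = E - 3 * ξ * (x - d) ^ 2 := by
    intro x
    rw [hE, hd, hB, hCc]
    field_simp
    ring
  set lo := (E - M) / (3 * ξ) with hlo
  set hi := (E - m) / (3 * ξ) with hhi
  set m0 := max lo 0 with hm0
  set r1 := Real.sqrt m0 with hr1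
  set r2 := Real.sqrt hi with hr2
  have h3ξ : (0 : ℝ) < 3 * ξ := by linarith
  have hsub : {x : ℝ |
      (ξ ^ 3 + ξ * q ^ 2) - (x ^ 3 + x * q₁ ^ 2)
        - ((ξ - x) ^ 3 + (ξ - x) * (q - q₁) ^ 2) ∈ I} ⊆
      Set.Icc (d - r2) (d - r1) ∪ Set.Icc (d + r1) (d + r2) := by
    intro x hx
    have hx' : E - 3 * ξ * (x - d) ^ 2 ∈ I := by rw [← hf x]; exact hx
    obtain ⟨h1, h2⟩ := hIcc hx'
    have hxhi : (x - d) ^ 2 ≤ hi := by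
      rw [hhi, le_div_iff₀ h3ξ]; nlinarith
    have hxlo : m0 ≤ (x - d) ^ 2 := by
      refine max_le ?_ (sq_nonneg _)
      rw [hlo, div_le_iff₀ h3ξ]; nlinarith
    have habs2 : |x - d| ≤ r2 := by
      rw [hr2, ← Real.sqrt_sq_eq_abs (x - d)]
      exact Real.sqrt_le_sqrt hxhi
    have habs1 : r1 ≤ |x - d| := by
      rw [hr1, ← Real.sqrt_sq_eq_abs (x - d)]
      exact Real.sqrt_le_sqrt hxlo
    rcases le_or_gt d x with hdx | hdx
    · right
      have : |x - d| = x - d := abs_of_nonneg (by linarith)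
      rw [this] at habs1 habs2
      exact ⟨by linarith, by linarith⟩
    · left
      have : |x - d| = d - x := by rw [abs_of_neg (show x - d < 0 by linarith)]; ring
      rw [this] at habs1 habs2
      exact ⟨by linarith, by linarith⟩
  have hkey : r2 - r1 ≤ Real.sqrt (M - m) / Real.sqrt ξ := by
    have hrhs : 0 ≤ Real.sqrt (M - m) / Real.sqrt ξ := by positivity
    rcases le_or_gt r2 r1 with h | h
    · linarith
    · have hm0n : 0 ≤ m0 := le_max_right _ _
      have hm0hi : m0 ≤ hi := by
        by_contra hc
        push_neg at hc
        have : r2 ≤ r1 := Real.sqrt_le_sqrt hc.le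
        linarith
      have hsum : r2 ≤ Real.sqrt (hi - m0) + r1 := by
        have hs1 := Real.sq_sqrt (sub_nonneg.mpr hm0hi)
        have hs2 := Real.sq_sqrt hm0n
        have hn1 := Real.sqrt_nonneg (hi - m0)
        have hn2 := Real.sqrt_nonneg m0
        have h1 : hi ≤ (Real.sqrt (hi - m0) + r1) ^ 2 := by
          rw [hr1]; nlinarith [mul_nonneg hn1 hn2]
        calc r2 = Real.sqrt hi := hr2
          _ ≤ Real.sqrt ((Real.sqrt (hi - m0) + r1) ^ 2) := Real.sqrt_le_sqrt h1
          _ = Real.sqrt (hi - m0) + r1 := Real.sqrt_sq (by rw [hr1]; positivity)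
      have hdiff : hi - m0 ≤ (M - m) / ξ := by
        have h1 : hi - lo = (M - m) / (3 * ξ) := by
          rw [hhi, hlo]; ring
        have h2 : hi - m0 ≤ hi - lo := by
          have := le_max_left lo (0:ℝ); linarith [le_max_left lo (0:ℝ)]
        have h3 : (M - m) / (3 * ξ) ≤ (M - m) / ξ := by
          apply div_le_div_of_nonneg_left (by linarith) hξ (by linarith)
        linarith
      have : Real.sqrt (hi - m0) ≤ Real.sqrt (M - m) / Real.sqrt ξ := by
        rw [← Real.sqrt_div (by linarith)]
        exact Real.sqrt_le_sqrt hdiff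
      linarith
  calc volume {x : ℝ |
      (ξ ^ 3 + ξ * q ^ 2) - (x ^ 3 + x * q₁ ^ 2)
        - ((ξ - x) ^ 3 + (ξ - x) * (q - q₁) ^ 2) ∈ I}
      ≤ volume (Set.Icc (d - r2) (d - r1) ∪ Set.Icc (d + r1) (d + r2)) :=
        measure_mono hsub
    _ ≤ volume (Set.Icc (d - r2) (d - r1)) + volume (Set.Icc (d + r1) (d + r2)) :=
        measure_union_le _ _
    _ = ENNReal.ofReal (r2 - r1) + ENNReal.ofReal (r2 - r1) := by
        rw [Real.volume_Icc, Real.volume_Icc]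
        congr 1 <;> ring_nf
    _ ≤ ENNReal.ofReal (Real.sqrt (M - m) / Real.sqrt ξ)
        + ENNReal.ofReal (Real.sqrt (M - m) / Real.sqrt ξ) := by
        gcongr <;> exact hkey
    _ = ENNReal.ofReal (2 * Real.sqrt (M - m) / Real.sqrt ξ) := by
        rw [← ENNReal.ofReal_add (by positivity) (by positivity)]
        congr 1; ring
    _ = ENNReal.ofReal (2 * Real.sqrt (volume I).toReal / Real.sqrt ξ) := by rw [hL]
end
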